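/- Let q be a prime power, m a positive integer, and n = q^m − 1. Let α be a primitive element of F_{q^m}, and let C be the primitive, narrow-sense BCH code over F_q of designed distance δ, i.e. C = {c ∈ F_q^n : Σ_{i=0}^{n−1} c_i α^{ij} = 0 for all 1 ≤ j ≤ δ−1}. If δ ≡ 0 (mod q) and δ + 1 ≤ n, then the minimum distance of C is at least δ + 1. -/
import Mathlib


/-- Primitive, narrow-sense BCH code of designed distance `δ`. -/
def bchCode (F : Type*) {E : Type*} [Field F] [Field E] [Algebra F E]
    (n : ℕ) (α : E) (δ : ℕ) : Submodule F (Fin n → F) where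
  carrier := {c | ∀ j : ℕ, 1 ≤ j → j ≤ δ - 1 →
    ∑ i : Fin n, algebraMap F E (c i) * α ^ ((i : ℕ) * j) = 0}
  zero_mem' := by intro j _ _; simp
  add_mem' := by
    intro a b ha hb j h1 h2
    have hA := ha j h1 h2
    have hB := hb j h1 h2
    simp only [Pi.add_apply, map_add, add_mul]
    rw [Finset.sum_add_distrib, hA, hB, add_zero]
  smul_mem' := by
    intro r a ha j h1 h2
    have hA := ha j h1 h2
    simp only [Pi.smul_apply, smul_eq_mul, map_mul, mul_assoc]
    rw [← Finset.mul_sum, hA, mul_zero]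


/-- BCH bound kernel: Vandermonde argument. -/
lemma bch_bound {F E : Type*} [Field F] [DecidableEq F] [Field E] [Algebra F E]
    {n : ℕ} (α : E) (hα0 : α ≠ 0)
    (hinj : ∀ i i' : Fin n, α ^ (i : ℕ) = α ^ (i' : ℕ) → i = i')
    (d : ℕ) (c : Fin n → F)
    (hc : ∀ j : ℕ, 1 ≤ j → j ≤ d →
      ∑ i : Fin n, algebraMap F E (c i) * α ^ ((i : ℕ) * j) = 0)
    (hne : c ≠ 0) : d + 1 ≤ hammingNorm c := by
  by_contra hlt
  push_neg at hlt
  have hs : hammingNorm c ≤ d := by omega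
  classical
  set S : Finset (Fin n) := Finset.univ.filter (fun i => c i ≠ 0) with hS
  have hcard : S.card = hammingNorm c := rfl
  have e : Fin S.card ≃ {x // x ∈ S} := S.equivFin.symm
  set f : Fin S.card → E := fun k => α ^ ((e k : Fin n) : ℕ) with hf
  have hfinj : Function.Injective f := by
    intro a b hab
    have := hinj _ _ hab
    exact e.injective (Subtype.ext this)
  set w : Fin S.card → E :=
    fun k => algebraMap F E (c (e k)) * α ^ ((e k : Fin n) : ℕ) with hw
  have hkey : ∀ i : Fin S.card, (∑ j : Fin S.card, w j * f j ^ (i : ℕ)) = 0 := by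
    intro i
    have h1 : (∑ j : Fin S.card, w j * f j ^ (i : ℕ))
        = ∑ x ∈ S, algebraMap F E (c x) * α ^ ((x : ℕ) * ((i : ℕ) + 1)) := by
      rw [← Finset.sum_coe_sort S]
      rw [← e.sum_comp (fun x : {x // x ∈ S} =>
        algebraMap F E (c x) * α ^ (((x : Fin n) : ℕ) * ((i : ℕ) + 1)))]
      refine Finset.sum_congr rfl fun j _ => ?_
      simp only [hw, hf, pow_mul, pow_succ]
      ring
    have h2 : (∑ x ∈ S, algebraMap F E (c x) * α ^ ((x : ℕ) * ((i : ℕ) + 1)))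
        = ∑ x : Fin n, algebraMap F E (c x) * α ^ ((x : ℕ) * ((i : ℕ) + 1)) := by
      refine Finset.sum_subset (Finset.subset_univ S) fun x _ hx => ?_
      simp only [hS, Finset.mem_filter, Finset.mem_univ, true_and, not_not] at hx
      simp [hx]
    rw [h1, h2]
    exact hc ((i : ℕ) + 1) (by omega) (by have := i.2; omega)
  have hw0 : w = 0 := Matrix.eq_zero_of_forall_pow_sum_mul_pow_eq_zero hfinj hkey
  obtain ⟨i0, hi0⟩ : ∃ i, c i ≠ 0 := by
    by_contra h
    push_neg at h
    exact hne (funext h)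
  have hi0S : i0 ∈ S := by simp [hS, hi0]
  have hpos : 0 < S.card := Finset.card_pos.mpr ⟨i0, hi0S⟩
  set k0 : Fin S.card := e.symm ⟨i0, hi0S⟩
  have : w k0 = 0 := by rw [hw0]; rfl
  rw [hw] at this
  simp only [k0, Equiv.apply_symm_apply] at this
  rcases mul_eq_zero.mp this with h | h
  · exact hi0 ((map_eq_zero _).mp h)
  · exact pow_ne_zero _ hα0 h

theorem bch_minDist_ge_of_dvd
    (q m : ℕ) (hq : IsPrimePow q) (hm : 0 < m)
    (F E : Type*) [Field F] [Fintype F] [DecidableEq F] [Field E] [Fintype E]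
    [Algebra F E]
    (hF : Fintype.card F = q) (hE : Fintype.card E = q ^ m)
    (α : E) (hα : orderOf α = q ^ m - 1)
    (δ : ℕ) (hdvd : q ∣ δ) (hδn : δ + 1 ≤ q ^ m - 1) :
    ∀ c ∈ bchCode F (q ^ m - 1) α δ, c ≠ 0 → δ + 1 ≤ hammingNorm c := by
  intro c hc hcne
  obtain ⟨p, k, hp, hk, rfl⟩ := hq
  have hpp : p.Prime := hp.nat_prime
  have hq2 : 2 ≤ p ^ k := by
    calc 2 ≤ p := hpp.two_le
    _ ≤ p ^ k := Nat.le_self_pow (by omega) p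
  have hn1 : 1 ≤ (p ^ k) ^ m - 1 := le_trans (by omega) hδn
  -- characteristic of E is p
  have hcharE : CharP E p := by
    have h1 : CharP E (ringChar E) := ringChar.charP E
    obtain ⟨d, hd, hcard⟩ := FiniteField.card E (ringChar E)
    have hdvd' : p ∣ ringChar E ^ (d : ℕ) := by
      rw [← hcard, hE, ← pow_mul]
      exact dvd_pow_self p (by positivity)
    have : p ∣ ringChar E := hpp.dvd_of_dvd_pow hdvd'
    have hpe : p = ringChar E := ((Nat.prime_dvd_prime_iff_eq hpp hd).mp this)
    rwa [hpe]
  haveI := hcharE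
  haveI : ExpChar E p := ExpChar.prime hpp
  -- α ≠ 0
  have hα0 : α ≠ 0 := by
    intro h
    have hfin : IsOfFinOrder α := by
      rw [← orderOf_pos_iff, hα]; omega
    obtain ⟨r, hr, hr1⟩ := isOfFinOrder_iff_pow_eq_one.mp hfin
    rw [h, zero_pow (by omega)] at hr1
    exact zero_ne_one hr1
  -- powers of α are injective on indices < n
  have hinj : ∀ i i' : Fin ((p ^ k) ^ m - 1), α ^ (i : ℕ) = α ^ (i' : ℕ) → i = i' := by
    intro i i' hii
    exact Fin.ext (pow_injOn_Iio_orderOf (by rw [hα]; exact i.2) (by rw [hα]; exact i'.2) hii)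
  -- extend the parity checks to j = δ
  have hext : ∀ j : ℕ, 1 ≤ j → j ≤ δ →
      ∑ i : Fin ((p ^ k) ^ m - 1), algebraMap F E (c i) * α ^ ((i : ℕ) * j) = 0 := by
    intro j h1 h2
    rcases lt_or_eq_of_le h2 with h | h
    · exact hc j h1 (by omega)
    · subst h
      obtain ⟨t, rfl⟩ := hdvd
      have ht1 : 1 ≤ t := by
        rcases Nat.eq_zero_or_pos t with h0 | h0
        · simp [h0] at h1
        · exact h0
      have htlt : t < p ^ k * t := by nlinarith
      have hchk := hc t ht1 (by omega)
      calc ∑ i : Fin ((p ^ k) ^ m - 1), algebraMap F E (c i) * α ^ ((i : ℕ) * (p ^ k * t))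
          = ∑ i : Fin ((p ^ k) ^ m - 1),
            (algebraMap F E (c i) * α ^ ((i : ℕ) * t)) ^ p ^ k := by
            refine Finset.sum_congr rfl fun i _ => ?_
            have hcc : (c i) ^ p ^ k = c i := by
              rw [← hF]; exact FiniteField.pow_card (c i)
            have hxp : (i : ℕ) * (p ^ k * t) = (i : ℕ) * t * p ^ k := by ring
            rw [mul_pow, ← map_pow, hcc, hxp, pow_mul]
        _ = (∑ i : Fin ((p ^ k) ^ m - 1),
            algebraMap F E (c i) * α ^ ((i : ℕ) * t)) ^ p ^ k := by
            exact (sum_pow_char_pow _ _ _ _).symm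
        _ = 0 := by rw [hchk, zero_pow]; positivity
  exact bch_bound α hα0 hinj δ c hext hcne
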